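/- Let c ∈ ℕ and let the weighted system (N,R,wt,K) be c-closed. Then for every d ∈ T_R, every c' ∈ ℕ with c' ≥ c + 1, and every elementary cycle w ∈ R* such that some leaf position p of d is (c',w)-cyclic: wt(d)_K ⊕ ⊕_{d'∈cotrees(d,w)} wt(d')_K = ⊕_{d'∈cotrees(d,w)} wt(d')_K. -/

import Mathlib

open scoped Classical

/-- Trees over a ranked set `R` with arity function `ar`:
`RT.node r ts` is a tree whose root is labelled `r` and which has `ar r` children. -/
inductive RT (R : Type) (ar : R → ℕ) : Type
  | node (r : R) (children : Fin (ar r) → RT R ar)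

namespace RT

variable {R : Type} {ar : R → ℕ}

/-- The rule labelling the root of a tree. -/
def rootRule : RT R ar → R
  | node r _ => r

/-- The subtree at a position (`none` if the position is not a position of the tree). -/
def subAt : RT R ar → List ℕ → Option (RT R ar)
  | t, [] => some t
  | node r ts, i :: p => if h : i < ar r then subAt (ts ⟨i, h⟩) p else none

/-- Replace the subtree at a position by another tree. -/
def replaceAt : RT R ar → List ℕ → RT R ar → RT R ar
  | _, [], s => s
  | node r ts, i :: p, s => node r fun j => if j.1 = i then replaceAt (ts j) p s else ts j

/-- The sequence of rule labels from the root to a position, inclusive. -/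
def seqTo : RT R ar → List ℕ → Option (List R)
  | node r _, [] => some [r]
  | node r ts, i :: p => if h : i < ar r then (seqTo (ts ⟨i, h⟩) p).map (fun l => r :: l) else none

/-- `p` is a leaf position of `d`, i.e. a valid position with no child positions. -/
def LeafAt (d : RT R ar) (p : List ℕ) : Prop :=
  ∃ t, subAt d p = some t ∧ ar t.rootRule = 0

/-- The height of a tree: `0` on nullary nodes, otherwise `1` plus the maximum height
of the direct subtrees. -/
def height : RT R ar → ℕ
  | node _ ts => Finset.univ.sup fun i => height (ts i) + 1

end RT

/-- The weight of a tree: evaluate it bottom-up, interpreting each rule `r` by the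
operation `wt r`. -/
def wtval {K R : Type} {ar : R → ℕ} (wt : ∀ r : R, (Fin (ar r) → K) → K) : RT R ar → K
  | .node r ts => wt r fun i => wtval wt (ts i)

section Cyclicity

variable {R : Type} {ar : R → ℕ}

/-- A string over `R` is an elementary cycle if it has length `> 1`, its first and last
symbols coincide, and it becomes repetition-free after deleting its last (resp. first)
symbol. -/
def ElementaryCycle (w : List R) : Prop :=
  1 < w.length ∧ w.head? = w.getLast? ∧ w.dropLast.Nodup ∧ w.tail.Nodup

/-- `ρ` is `(c,w)`-cyclic: `ρ = v₀ w v₁ ⋯ w v_c` (with `c` occurrences of the elementary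
cycle `w`) where `w` is not an infix of any `vᵢ`. -/
def CWCyclic (c : ℕ) (w ρ : List R) : Prop :=
  ElementaryCycle w ∧
  ∃ v : ℕ → List R,
    ρ = v 0 ++ (((List.range c).map fun i => w ++ v (i + 1)).flatten) ∧
    ∀ i ≤ c, ¬ w <:+: v i

/-- `ρ` is `c`-cyclic: it is `(c,w)`-cyclic for some elementary cycle `w` and not
`(c',w')`-cyclic for any `c' > c` and elementary cycle `w'`. -/
def CCyclic (c : ℕ) (ρ : List R) : Prop :=
  (∃ w, CWCyclic c w ρ) ∧ ∀ c', c < c' → ∀ w', ¬ CWCyclic c' w' ρ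

/-- The leaf position `p` of `d` is `(c,w)`-cyclic. -/
def LeafCW (c : ℕ) (w : List R) (d : RT R ar) (p : List ℕ) : Prop :=
  RT.LeafAt d p ∧ ∃ ρ, RT.seqTo d p = some ρ ∧ CWCyclic c w ρ

/-- The leaf position `p` of `d` is `c`-cyclic. -/
def LeafC (c : ℕ) (d : RT R ar) (p : List ℕ) : Prop :=
  RT.LeafAt d p ∧ ∃ ρ, RT.seqTo d p = some ρ ∧ CCyclic c ρ

/-- The tree `d` is `c`-cyclic: some leaf of `d` is `c`-cyclic and no leaf of `d` is
`c'`-cyclic for any `c' > c`. -/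
def TreeC (c : ℕ) (d : RT R ar) : Prop :=
  (∃ p, LeafC c d p) ∧ ∀ c', c < c' → ∀ p, ¬ LeafC c' d p

/-- `d ⊢_w d'` : there are positions `p ≤ p'` of `d` whose connecting label sequence is
`w`, and `d'` is obtained by replacing the subtree at `p` by the subtree at `p'`.
(The position `p'` is `p ++ q`.) -/
def CutW (w : List R) (d d' : RT R ar) : Prop :=
  ∃ p q t s, RT.subAt d p = some t ∧ RT.subAt t q = some s ∧
    RT.seqTo t q = some w ∧ d' = RT.replaceAt d p s

/-- `d ⊢ d'` : `d ⊢_w d'` for some elementary cycle `w`. -/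
def Cut (d d' : RT R ar) : Prop := ∃ w, ElementaryCycle w ∧ CutW w d d'

/-- The set of `w`-cutout trees of `d`. -/
def cotreesW (w : List R) (d : RT R ar) : Set (RT R ar) := {d' | Relation.TransGen (CutW w) d d'}

/-- The set of cutout trees of `d`. -/
def cotrees (d : RT R ar) : Set (RT R ar) := {d' | Relation.TransGen Cut d d'}

end Cyclicity

section Rules

variable {N R : Type}

/-- Well-sorted trees over a rule system given by `lhs` and `rhs`: at each node labelled
`r`, the `i`-th child is a well-sorted tree whose root label has left-hand side equal to
the `i`-th nonterminal of `rhs r`. -/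
inductive WellSorted (lhs : R → N) (rhs : R → List N) :
    RT R (fun r => (rhs r).length) → Prop
  | node (r : R) (ts : Fin (rhs r).length → RT R fun r => (rhs r).length)
      (hsort : ∀ i, lhs (ts i).rootRule = (rhs r).get i)
      (hrec : ∀ i, WellSorted lhs rhs (ts i)) : WellSorted lhs rhs (RT.node r ts)

/-- `T_R` : the set of (well-sorted) trees over the rule system. -/
def TRset (lhs : R → N) (rhs : R → List N) : Set (RT R fun r => (rhs r).length) :=
  {d | WellSorted lhs rhs d}

/-- `(T_R)_A` : the set of trees of sort `A`. -/
def TRA (lhs : R → N) (rhs : R → List N) (A : N) : Set (RT R fun r => (rhs r).length) :=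
  {d | WellSorted lhs rhs d ∧ lhs d.rootRule = A}

/-- `T_R^{(c)}` : the set of trees that are `c'`-cyclic for some `c' ≤ c`. -/
def TRcset (lhs : R → N) (rhs : R → List N) (c : ℕ) : Set (RT R fun r => (rhs r).length) :=
  {d | WellSorted lhs rhs d ∧ ∃ c' ≤ c, TreeC c' d}

end Rules

/-- An infinitary sum operation on a commutative monoid `K`, turning it into a complete
monoid: the sum of the empty family is `0`, the sum of a singleton family is its member,
the sum of a two-element family is the binary sum, and the partition law holds (every
partition of a countable index set `I` into sets indexed by `J` is given by the fibers
of a map `g : I → J`). -/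
structure InfSum (K : Type) [AddCommMonoid K] where
  isum : ∀ {I : Type} [Countable I], (I → K) → K
  isum_empty : ∀ {I : Type} [Countable I] (f : I → K), IsEmpty I → isum f = 0
  isum_single : ∀ {I : Type} [Countable I] (f : I → K) (j : I), (∀ i, i = j) → isum f = f j
  isum_pair : ∀ {I : Type} [Countable I] (f : I → K) (j j' : I), j ≠ j' →
    (∀ i, i = j ∨ i = j') → isum f = f j + f j'
  isum_partition : ∀ {I J : Type} [Countable I] [Countable J] (f : I → K) (g : I → J),
    isum f = isum fun j : J => isum fun i : {i : I // g i = j} => f i.1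

section MMonoid

variable {K : Type} [AddCommMonoid K]

/-- A complete monoid is d-complete if, whenever all the partial sums `Σ_{i ≤ n} f i`
eventually equal `k`, the infinitary sum of the family equals `k`. -/
def InfSum.DComplete (S : InfSum K) : Prop :=
  ∀ (k : K) (f : ℕ → K),
    (∃ n₀ : ℕ, ∀ n, n₀ ≤ n → (∑ i ∈ Finset.range (n + 1), f i) = k) → S.isum f = k

/-- A complete monoid is completely idempotent if the infinitary sum of every constant
family over a nonempty countable index set is that constant. -/
def InfSum.CompletelyIdempotent (S : InfSum K) : Prop :=
  ∀ (I : Type) [Countable I], Nonempty I → ∀ k : K, S.isum (fun _ : I => k) = k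

/-- The family `Ω` of operation sets contains all the null (constantly `0`) operations. -/
def HasZeroOps (Ω : ∀ n : ℕ, Set ((Fin n → K) → K)) : Prop :=
  ∀ n : ℕ, (fun _ : Fin n → K => (0 : K)) ∈ Ω n

/-- Distributivity of an M-monoid: every operation in `Ω` distributes over `+` in each
argument, and `0` is absorbing for every operation in `Ω`. -/
def DistributiveOps (Ω : ∀ n : ℕ, Set ((Fin n → K) → K)) : Prop :=
  ∀ n : ℕ, ∀ ω ∈ Ω n,
    (∀ (x : Fin n → K) (i : Fin n) (a b : K),
      ω (Function.update x i (a + b)) = ω (Function.update x i a) + ω (Function.update x i b)) ∧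
    (∀ x : Fin n → K, (∃ i, x i = 0) → ω x = 0)

end MMonoid

/-- The weighted system `(N, R, wt, K)` is `c`-closed: for every well-sorted tree `d` and
elementary cycle `w` such that some leaf position of `d` is `(c+1,w)`-cyclic, the weight
of `d` is subsumed by the (finite) `⊕`-sum of the weights of the `w`-cutout trees of `d`. -/
def CClosed {K : Type} [AddCommMonoid K] {N R : Type} (lhs : R → N) (rhs : R → List N)
    (wt : ∀ r : R, (Fin (rhs r).length → K) → K) (c : ℕ) : Prop :=
  ∀ d : RT R (fun r => (rhs r).length), WellSorted lhs rhs d →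
    ∀ w : List R, ElementaryCycle w → (∃ p, LeafCW (c + 1) w d p) →
      (wtval wt d + ∑ᶠ d' ∈ cotreesW w d, wtval wt d') = ∑ᶠ d' ∈ cotreesW w d, wtval wt d'

namespace Aux
open RT

variable {R : Type} {ar : R → ℕ}

@[simp] lemma subAt_nil (d : RT R ar) : subAt d [] = some d := by cases d; rfl

@[simp] lemma replaceAt_nil (d s : RT R ar) : replaceAt d [] s = s := by cases d; rfl

lemma height_node (r : R) (ts : Fin (ar r) → RT R ar) :
    height (RT.node r ts) = Finset.univ.sup (fun i => height (ts i) + 1) := rfl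

lemma replaceAt_cons (r : R) (ts : Fin (ar r) → RT R ar) (i : ℕ) (p : List ℕ) (s : RT R ar) :
    replaceAt (RT.node r ts) (i :: p) s
      = RT.node r (fun j => if j.1 = i then replaceAt (ts j) p s else ts j) := rfl

lemma subAt_cons (r : R) (ts : Fin (ar r) → RT R ar) (i : ℕ) (p : List ℕ) :
    subAt (RT.node r ts) (i :: p) = if h : i < ar r then subAt (ts ⟨i,h⟩) p else none := rfl

lemma seqTo_cons (r : R) (ts : Fin (ar r) → RT R ar) (i : ℕ) (p : List ℕ) :
    seqTo (RT.node r ts) (i :: p)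
      = if h : i < ar r then (seqTo (ts ⟨i,h⟩) p).map (fun l => r :: l) else none := rfl

lemma le_height_node (r : R) (ts : Fin (ar r) → RT R ar) (i : Fin (ar r)) :
    height (ts i) + 1 ≤ height (RT.node r ts) := by
  rw [height_node]
  exact Finset.le_sup (f := fun j => height (ts j) + 1) (Finset.mem_univ i)

lemma subAt_append (p q : List ℕ) : ∀ d : RT R ar,
    subAt d (p ++ q) = (subAt d p).bind (fun t => subAt t q) := by
  induction p with
  | nil => intro d; simp [subAt]
  | cons i p ih =>
    intro d
    cases d with
    | node r ts =>
      simp only [List.cons_append, subAt]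
      split
      · exact ih _
      · simp

lemma replaceAt_self : ∀ (p : List ℕ) (d t : RT R ar), subAt d p = some t →
    replaceAt d p t = d := by
  intro p
  induction p with
  | nil => intro d t h; simp at h; simp [h]
  | cons i p ih =>
    intro d t h
    cases d with
    | node r ts =>
      simp only [subAt] at h
      split at h
      · next hi =>
        simp only [replaceAt]
        congr 1
        funext j
        split
        · next hj =>
          have : j = ⟨i, hi⟩ := Fin.ext hj
          subst this
          exact ih _ _ h
        · rfl
      · exact absurd h (by simp)

lemma subAt_replaceAt : ∀ (p : List ℕ) (d s : RT R ar), (subAt d p).isSome →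
    subAt (replaceAt d p s) p = some s := by
  intro p
  induction p with
  | nil => intro d s _; simp [subAt, replaceAt]
  | cons i p ih =>
    intro d s h
    cases d with
    | node r ts =>
      rw [subAt_cons] at h
      split at h
      · next hi =>
        rw [replaceAt_cons, subAt_cons, dif_pos hi]
        simpa using ih _ s h
      · simp at h

lemma replaceAt_replaceAt : ∀ (p q : List ℕ) (d a s : RT R ar),
    replaceAt (replaceAt d p a) (p ++ q) s = replaceAt d p (replaceAt a q s) := by
  intro p
  induction p with
  | nil => intro q d a s; simp
  | cons i p ih =>
    intro q d a s
    cases d with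
    | node r ts =>
      rw [List.cons_append, replaceAt_cons, replaceAt_cons, replaceAt_cons]
      congr 1
      funext j
      by_cases hj : j.1 = i
      · simp only [if_pos hj]
        exact ih _ _ _ _
      · simp only [if_neg hj]

lemma seqTo_length : ∀ (p : List ℕ) (d : RT R ar) (ρ : List R), seqTo d p = some ρ →
    ρ.length = p.length + 1 := by
  intro p
  induction p with
  | nil => intro d ρ h; cases d; simp [seqTo] at h; subst h; rfl
  | cons i p ih =>
    intro d ρ h
    cases d with
    | node r ts =>
      simp only [seqTo] at h
      split at h
      · simp only [Option.map_eq_some_iff] at h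
        obtain ⟨l, hl, rfl⟩ := h
        simp [ih _ _ hl]
      · simp at h

lemma seqTo_split : ∀ (n : ℕ) (p : List ℕ) (d : RT R ar) (ρ : List R), seqTo d p = some ρ →
    n ≤ p.length → ∃ t, subAt d (p.take n) = some t ∧ seqTo t (p.drop n) = some (ρ.drop n) := by
  intro n
  induction n with
  | zero => intro p d ρ h _; exact ⟨d, by simp, by simpa using h⟩
  | succ n ih =>
    intro p d ρ h hn
    cases p with
    | nil => simp at hn
    | cons i p =>
      cases d with
      | node r ts =>
        simp only [seqTo] at h
        split at h
        · next hi =>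
          simp only [Option.map_eq_some_iff] at h
          obtain ⟨l, hl, rfl⟩ := h
          obtain ⟨t, ht1, ht2⟩ := ih p (ts ⟨i, hi⟩) l hl (by simpa using hn)
          exact ⟨t, by simpa [subAt, hi] using ht1, by simpa using ht2⟩
        · simp at h

lemma height_subAt_le : ∀ (p : List ℕ) (d t : RT R ar), subAt d p = some t →
    height t ≤ height d := by
  intro p
  induction p with
  | nil => intro d t h; simp at h; subst h; rfl
  | cons i p ih =>
    intro d t h
    cases d with
    | node r ts =>
      simp only [subAt] at h
      split at h
      · next hi =>
        refine le_trans (ih _ _ h) ?_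
        have h2 := le_height_node r ts ⟨i, hi⟩
        omega
      · simp at h

lemma height_replaceAt_le : ∀ (p : List ℕ) (d t s : RT R ar), subAt d p = some t →
    height s ≤ height t → height (replaceAt d p s) ≤ height d := by
  intro p
  induction p with
  | nil => intro d t s h hs; simp at h; subst h; simpa using hs
  | cons i p ih =>
    intro d t s h hs
    cases d with
    | node r ts =>
      simp only [subAt] at h
      split at h
      · next hi =>
        simp only [replaceAt, height]
        apply Finset.sup_mono_fun
        intro j _
        by_cases hj : j.1 = i
        · simp only [if_pos hj]
          have : j = ⟨i, hi⟩ := Fin.ext hj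
          subst this
          have := ih _ _ s h hs
          omega
        · simp [if_neg hj]
      · simp at h

lemma cutW_height_le {w : List R} {a b : RT R ar} (h : CutW w a b) : height b ≤ height a := by
  obtain ⟨p, q, t, s, ht, hs, _, rfl⟩ := h
  exact height_replaceAt_le p a t s ht (height_subAt_le q t s hs)

lemma cotreesW_height_le {w : List R} {d b : RT R ar} (h : b ∈ cotreesW w d) :
    height b ≤ height d := by
  induction h with
  | single h => exact cutW_height_le h
  | tail _ h ih => exact le_trans (cutW_height_le h) ih

def childEmb (n : ℕ) :
    {t : RT R ar // height t ≤ n + 1} → Σ r : R, (Fin (ar r) → {t : RT R ar // height t ≤ n}) :=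
  fun x => match x with
  | ⟨RT.node r ts, hx⟩ =>
      ⟨r, fun i => ⟨ts i, by have h2 := le_height_node r ts i; omega⟩⟩

lemma finite_height_le [Finite R] : ∀ n : ℕ, Finite {t : RT R ar // height t ≤ n} := by
  intro n
  induction n with
  | zero =>
    apply Finite.of_injective (fun x => x.1.rootRule)
    rintro ⟨⟨r, ts⟩, hx⟩ ⟨⟨r', ts'⟩, hy⟩ h
    simp only [rootRule] at h
    subst h
    have h0 : ar r = 0 := by
      by_contra hne
      have : 0 < ar r := Nat.pos_of_ne_zero hne
      have h2 := le_height_node r ts ⟨0, this⟩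
      omega
    haveI : IsEmpty (Fin (ar r)) := by rw [h0]; exact Fin.isEmpty'
    have : ts = ts' := funext fun i => (IsEmpty.false i).elim
    subst this
    rfl
  | succ n ih =>
    apply Finite.of_injective (childEmb n)
    rintro ⟨⟨r, ts⟩, hx⟩ ⟨⟨r', ts'⟩, hy⟩ h
    simp only [childEmb] at h
    obtain ⟨h1, h2⟩ := Sigma.mk.inj_iff.mp h
    subst h1
    have h2' := eq_of_heq h2
    have : ts = ts' := by
      funext i
      exact congrArg Subtype.val (congrFun h2' i)
    subst this
    rfl

lemma cotreesW_finite [Finite R] (w : List R) (d : RT R ar) : (cotreesW w d).Finite := by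
  have h1 : cotreesW w d ⊆ {t : RT R ar | height t ≤ height d} :=
    fun b hb => cotreesW_height_le hb
  haveI : Finite {t : RT R ar | height t ≤ height d} := finite_height_le (height d)
  exact Set.Finite.subset (Set.toFinite _) h1


lemma wellSorted_subAt {N : Type} {lhs : R → N} {rhs : R → List N} :
    ∀ (p : List ℕ) (d t : RT R fun r => (rhs r).length), WellSorted lhs rhs d →
      RT.subAt d p = some t → WellSorted lhs rhs t := by
  intro p
  induction p with
  | nil => intro d t _ h; simp at h; subst h; assumption
  | cons i p ih =>
    intro d t hws h
    cases d with
    | node r ts =>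
      rw [subAt_cons] at h
      split at h
      · next hi =>
        cases hws with
        | node _ _ hsort hrec => exact ih _ _ (hrec ⟨i, hi⟩) h
      · simp at h

/-- Evaluation of the one-hole context obtained from `d` by removing the subtree at `p`. -/
def ctxEval {K : Type} (wt : ∀ r : R, (Fin (ar r) → K) → K) : RT R ar → List ℕ → K → K
  | _, [], k => k
  | RT.node r ts, i :: p, k =>
      if h : i < ar r then
        wt r (fun j => if j.1 = i then ctxEval wt (ts ⟨i, h⟩) p k else wtval wt (ts j))
      else k

@[simp] lemma ctxEval_nil {K : Type} (wt : ∀ r : R, (Fin (ar r) → K) → K) (d : RT R ar)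
    (k : K) : ctxEval wt d [] k = k := by cases d; rfl

lemma if_eq_update {K : Type} {n : ℕ} (f : Fin n → K) (i : ℕ) (h : i < n) (E : K) :
    (fun j : Fin n => if j.1 = i then E else f j) = Function.update f ⟨i, h⟩ E := by
  funext j
  rw [Function.update_apply]
  by_cases hj : j = ⟨i, h⟩
  · subst hj; simp
  · rw [if_neg hj, if_neg (fun hc => hj (Fin.ext hc))]

lemma wtval_replaceAt {K : Type} (wt : ∀ r : R, (Fin (ar r) → K) → K) :
    ∀ (p : List ℕ) (d s : RT R ar), (subAt d p).isSome →
      wtval wt (replaceAt d p s) = ctxEval wt d p (wtval wt s) := by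
  intro p
  induction p with
  | nil => intro d s _; simp
  | cons i p ih =>
    intro d s h
    cases d with
    | node r ts =>
      rw [subAt_cons] at h
      split at h
      · next hi =>
        rw [replaceAt_cons]
        show wt r _ = _
        rw [ctxEval, dif_pos hi]
        congr 1
        funext j
        by_cases hj : j.1 = i
        · have hj' : j = ⟨i, hi⟩ := Fin.ext hj
          subst hj'
          simp only [if_pos hj]
          exact ih _ s h
        · simp only [if_neg hj]
      · simp at h

lemma ctxEval_wtval {K : Type} (wt : ∀ r : R, (Fin (ar r) → K) → K)
    (p : List ℕ) (d t : RT R ar) (h : subAt d p = some t) :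
    ctxEval wt d p (wtval wt t) = wtval wt d := by
  rw [← wtval_replaceAt wt p d t (by simp [h]), replaceAt_self p d t h]

section KStuff

variable {K : Type} [AddCommMonoid K] {Ω : ∀ n : ℕ, Set ((Fin n → K) → K)}
  (hΩd : DistributiveOps Ω) (wt : ∀ r : R, (Fin (ar r) → K) → K)
  (hwt : ∀ r : R, wt r ∈ Ω (ar r))

include hΩd hwt

lemma ctxEval_add : ∀ (p : List ℕ) (d : RT R ar), (subAt d p).isSome → ∀ a b : K,
    ctxEval wt d p (a + b) = ctxEval wt d p a + ctxEval wt d p b := by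
  intro p
  induction p with
  | nil => intro d _ a b; simp
  | cons i p ih =>
    intro d h a b
    cases d with
    | node r ts =>
      rw [subAt_cons] at h
      split at h
      · next hi =>
        rw [ctxEval, ctxEval, ctxEval, dif_pos hi, dif_pos hi, dif_pos hi]
        rw [if_eq_update _ i hi, if_eq_update _ i hi, if_eq_update _ i hi]
        rw [ih _ h a b]
        exact (hΩd _ (wt r) (hwt r)).1 _ _ _ _
      · simp at h

lemma ctxEval_zero : ∀ (p : List ℕ) (d : RT R ar), (subAt d p).isSome →
    ctxEval wt d p (0 : K) = 0 := by
  intro p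
  induction p with
  | nil => intro d _; simp
  | cons i p ih =>
    intro d h
    cases d with
    | node r ts =>
      rw [subAt_cons] at h
      split at h
      · next hi =>
        rw [ctxEval, dif_pos hi]
        apply (hΩd _ (wt r) (hwt r)).2
        refine ⟨⟨i, hi⟩, ?_⟩
        simp [ih _ h]
      · simp at h

lemma ctxEval_finsetSum {ι : Type} (p : List ℕ) (d : RT R ar) (hp : (subAt d p).isSome)
    (s : Finset ι) (g : ι → K) :
    ctxEval wt d p (∑ i ∈ s, g i) = ∑ i ∈ s, ctxEval wt d p (g i) := by
  classical
  induction s using Finset.induction with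
  | empty => simpa using ctxEval_zero hΩd wt hwt p d hp
  | insert _ _ hni ih =>
    rw [Finset.sum_insert hni, Finset.sum_insert hni, ctxEval_add hΩd wt hwt p d hp, ih]

end KStuff

lemma cutW_replace {w : List R} (p₂ : List ℕ) (d : RT R ar) (hp : (subAt d p₂).isSome)
    {a b : RT R ar} (h : CutW w a b) : CutW w (replaceAt d p₂ a) (replaceAt d p₂ b) := by
  obtain ⟨p, q, t, s, ht, hs, hseq, rfl⟩ := h
  refine ⟨p₂ ++ p, q, t, s, ?_, hs, hseq, ?_⟩
  · rw [subAt_append, subAt_replaceAt p₂ d a hp]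
    exact ht
  · rw [replaceAt_replaceAt]

lemma cotreesW_replace {w : List R} (p₂ : List ℕ) (d t₀ : RT R ar)
    (h : subAt d p₂ = some t₀) {g : RT R ar} (hg : g ∈ cotreesW w t₀) :
    replaceAt d p₂ g ∈ cotreesW w d := by
  have hlift : Relation.TransGen (CutW w) (replaceAt d p₂ t₀) (replaceAt d p₂ g) :=
    Relation.TransGen.lift (fun x => replaceAt d p₂ x)
    (fun a b hab => cutW_replace p₂ d (by simp [h]) hab) _ _ hg
  beta_reduce at hlift
  rwa [replaceAt_self p₂ d t₀ h] at hlift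

lemma cwcyclic_suffix {c c' : ℕ} (hc : c + 1 ≤ c') {w ρ : List R} (h : CWCyclic c' w ρ) :
    ∃ A B : List R, ρ = A ++ B ∧ w.length ≤ B.length ∧ CWCyclic (c + 1) w B := by
  obtain ⟨hw, v, hρ, hinf⟩ := h
  set m := c' - (c + 1) with hm
  have hc' : c' = m + (c + 1) := by omega
  refine ⟨v 0 ++ ((List.range m).map fun i => w ++ v (i + 1)).flatten,
    ((List.range (c + 1)).map fun i => w ++ v (m + i + 1)).flatten, ?_, ?_, ?_⟩
  · rw [hρ, hc', List.range_add, List.map_append, List.flatten_append, List.map_map,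
      List.append_assoc]
    rfl
  · have : List.range (c + 1) = 0 :: (List.range c).map Nat.succ := List.range_succ_eq_map
    rw [this]
    simp
  · refine ⟨hw, fun j => if j = 0 then [] else v (m + j), ?_, ?_⟩
    · simp [Nat.add_assoc]
    · intro i hi
      show ¬ w <:+: (if i = 0 then [] else v (m + i))
      by_cases hi0 : i = 0
      · subst hi0
        rw [if_pos rfl]
        intro hcon
        have := List.eq_nil_of_infix_nil hcon
        subst this
        simpa using hw.1
      · rw [if_neg hi0]
        exact hinf (m + i) (by omega)

end Aux

/-- In a `c`-closed weighted system, the closedness equation extends from `(c+1,w)`-cyclic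
leaves to `(c',w)`-cyclic leaves for every `c' ≥ c + 1`. -/
theorem closed_for_bigger_cycle_counts {N R K : Type} [Fintype N] [Nonempty N] [Fintype R]
    [AddCommMonoid K] (S : InfSum K) (hdc : S.DComplete)
    (Ω : ∀ n : ℕ, Set ((Fin n → K) → K)) (hΩ0 : HasZeroOps Ω) (hΩd : DistributiveOps Ω)
    (lhs : R → N) (rhs : R → List N)
    (wt : ∀ r : R, (Fin (rhs r).length → K) → K) (hwt : ∀ r : R, wt r ∈ Ω (rhs r).length)
    (c : ℕ) (hclosed : CClosed lhs rhs wt c) :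
    ∀ d : RT R (fun r => (rhs r).length), WellSorted lhs rhs d →
      ∀ c' : ℕ, c + 1 ≤ c' → ∀ w : List R, ElementaryCycle w → (∃ p, LeafCW c' w d p) →
        (wtval wt d + ∑ᶠ d' ∈ cotreesW w d, wtval wt d')
          = ∑ᶠ d' ∈ cotreesW w d, wtval wt d' := by
  rintro d hws c' hc' w hw ⟨p, hpleaf, ρ, hseq, hcyc⟩
  -- decompose the label sequence: a suffix `B` of `ρ` is `(c+1,w)`-cyclic
  obtain ⟨A, B, hρAB, hBlen, hBcyc⟩ := Aux.cwcyclic_suffix hc' hcyc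
  have hρlen := Aux.seqTo_length p d ρ hseq
  have hABlen : ρ.length = A.length + B.length := by rw [hρAB, List.length_append]
  have hw2 : 1 < w.length := hw.1
  have hnle : A.length ≤ p.length := by omega
  obtain ⟨t₀, hsub, hseqt⟩ := Aux.seqTo_split A.length p d ρ hseq hnle
  have hdropρ : ρ.drop A.length = B := by rw [hρAB]; exact List.drop_left
  rw [hdropρ] at hseqt
  -- the subtree `t₀` at `p₂ := p.take A.length` has a `(c+1,w)`-cyclic leaf
  obtain ⟨leafT, hleaf1, hleaf2⟩ := hpleaf
  have hcompose : RT.subAt d p = RT.subAt t₀ (p.drop A.length) := by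
    have h1 := Aux.subAt_append (p.take A.length) (p.drop A.length) d
    rw [List.take_append_drop, hsub] at h1
    simpa using h1
  have hsubfull : RT.subAt t₀ (p.drop A.length) = some leafT := hcompose.symm.trans hleaf1
  have hws₀ : WellSorted lhs rhs t₀ := Aux.wellSorted_subAt _ d t₀ hws hsub
  -- apply `c`-closedness to `t₀`
  have hcl := hclosed t₀ hws₀ w hw
    ⟨p.drop A.length, ⟨leafT, hsubfull, hleaf2⟩, B, hseqt, hBcyc⟩
  -- lift the equation for `t₀` through the context `d[·]_{p₂}`
  have hvalid : (RT.subAt d (p.take A.length)).isSome := by simp [hsub]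
  have hGfin : (cotreesW w t₀).Finite := Aux.cotreesW_finite w t₀
  have hFfin : (cotreesW w d).Finite := Aux.cotreesW_finite w d
  have hesub : (fun g => RT.replaceAt d (p.take A.length) g) '' cotreesW w t₀ ⊆ cotreesW w d := by
    rintro x ⟨g, hg, rfl⟩
    exact Aux.cotreesW_replace (p.take A.length) d t₀ hsub hg
  have hinj : Set.InjOn (fun g => RT.replaceAt d (p.take A.length) g) (cotreesW w t₀) := by
    intro x _ y _ hxy
    have h1 := Aux.subAt_replaceAt (p.take A.length) d x hvalid
    have h2 := Aux.subAt_replaceAt (p.take A.length) d y hvalid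
    simp only at hxy
    rw [hxy, h2] at h1
    exact (Option.some_inj.mp h1).symm
  have hEG : (∑ᶠ x ∈ (fun g => RT.replaceAt d (p.take A.length) g) '' cotreesW w t₀,
      wtval wt x) = Aux.ctxEval wt d (p.take A.length) (∑ᶠ g ∈ cotreesW w t₀, wtval wt g) := by
    rw [finsum_mem_image hinj, ← hGfin.coe_toFinset, finsum_mem_coe_finset,
      finsum_mem_coe_finset, Aux.ctxEval_finsetSum hΩd wt hwt (p.take A.length) d hvalid]
    refine Finset.sum_congr rfl fun g _ => ?_
    exact Aux.wtval_replaceAt wt (p.take A.length) d g hvalid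
  have hwd : wtval wt d = Aux.ctxEval wt d (p.take A.length) (wtval wt t₀) :=
    (Aux.ctxEval_wtval wt (p.take A.length) d t₀ hsub).symm
  have hkey : wtval wt d + (∑ᶠ x ∈ (fun g => RT.replaceAt d (p.take A.length) g) ''
      cotreesW w t₀, wtval wt x) = ∑ᶠ x ∈ (fun g => RT.replaceAt d (p.take A.length) g) ''
      cotreesW w t₀, wtval wt x := by
    rw [hEG, hwd, ← Aux.ctxEval_add hΩd wt hwt (p.take A.length) d hvalid, hcl]
  -- split the full sum and absorb
  have hsplit : (∑ᶠ x ∈ cotreesW w d, wtval wt x)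
      = (∑ᶠ x ∈ (fun g => RT.replaceAt d (p.take A.length) g) '' cotreesW w t₀, wtval wt x)
        + ∑ᶠ x ∈ cotreesW w d \ (fun g => RT.replaceAt d (p.take A.length) g) ''
            cotreesW w t₀, wtval wt x := by
    rw [← finsum_mem_union Set.disjoint_sdiff_right (hFfin.subset hesub)
      (hFfin.subset Set.diff_subset), Set.union_diff_cancel hesub]
  rw [hsplit, ← add_assoc, hkey]
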